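/- Let n ≥ 1, k ≥ 0, l ≥ 0 be integers, m ∈ ℤ, s ∈ ℂ, and set λ := l(2l+2k+n−2), a := (m+4l+2k+n)/4, and b := 2l+k+n/2. Then the function ψ(ρ) := e^{−isρ²} ρ^{2l} ₁F₁(a, b, 2isρ²) satisfies ρ²ψ''(ρ) + (n−1+2k)ρψ'(ρ) + (4s²ρ⁴ − 2ismρ² − 2λ)ψ(ρ) = 0 for all ρ > 0. -/

import Mathlib

/-- Confluent hypergeometric function of the first kind
`₁F₁(a,b,z) = ∑ⱼ (a)ⱼ/(b)ⱼ · zʲ/j!`. -/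
noncomputable def oneF1 (a b z : ℂ) : ℂ :=
  ∑' j : ℕ, ((ascPochhammer ℂ j).eval a / (ascPochhammer ℂ j).eval b) * z ^ j / (j.factorial : ℂ)

/-- `b` is not a nonpositive integer. -/
def NotNonposInt (b : ℂ) : Prop := ∀ m : ℤ, m ≤ 0 → b ≠ (m : ℂ)

open FormalMultilinearSeries Filter Complex ENNReal NNReal

/-- series coefficients of ₁F₁ -/
noncomputable def kc (a b : ℂ) (j : ℕ) : ℂ :=
  (ascPochhammer ℂ j).eval a / ((ascPochhammer ℂ j).eval b * j.factorial)

lemma oneF1_eq_tsum (a b z : ℂ) : oneF1 a b z = ∑' j : ℕ, kc a b j * z ^ j := by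
  refine tsum_congr fun j => ?_
  rw [kc, div_mul_eq_mul_div, div_div, div_mul_eq_mul_div]

lemma poch_real (x : ℝ) (n : ℕ) :
    (ascPochhammer ℂ n).eval ((x : ℝ) : ℂ) = (((ascPochhammer ℝ n).eval x : ℝ) : ℂ) := by
  induction n with
  | zero => simp
  | succ n ih =>
    rw [ascPochhammer_succ_right, ascPochhammer_succ_right]
    simp only [Polynomial.eval_mul, Polynomial.eval_add, Polynomial.eval_X,
      Polynomial.eval_natCast, ih]
    push_cast
    ring

lemma poch_norm_le (a : ℂ) (n : ℕ) :
    ‖(ascPochhammer ℂ n).eval a‖ ≤ (ascPochhammer ℝ n).eval (‖a‖ + 1) := by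
  induction n with
  | zero => simp
  | succ n ih =>
    rw [ascPochhammer_succ_right, ascPochhammer_succ_right]
    simp only [Polynomial.eval_mul, Polynomial.eval_add, Polynomial.eval_X,
      Polynomial.eval_natCast, norm_mul]
    have h1 : ‖a + (n : ℂ)‖ ≤ ‖a‖ + 1 + n := by
      calc ‖a + (n : ℂ)‖ ≤ ‖a‖ + ‖(n : ℂ)‖ := norm_add_le _ _
      _ ≤ ‖a‖ + 1 + n := by rw [Complex.norm_natCast]; linarith
    exact mul_le_mul ih h1 (norm_nonneg _)
      (le_of_lt (ascPochhammer_pos n _ (by positivity)))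

lemma poch_pos {x : ℝ} (hx : 0 < x) (n : ℕ) : 0 < (ascPochhammer ℝ n).eval x :=
  ascPochhammer_pos n x hx

/-- boundedness of coefficients by a Pochhammer quotient, with shift `j` -/
def PochBdd (A br : ℝ) (j : ℕ) (c : ℕ → ℂ) : Prop :=
  ∀ n : ℕ, ‖c n‖ ≤ (ascPochhammer ℝ (n + j)).eval A /
    ((ascPochhammer ℝ (n + j)).eval br * n.factorial)

lemma pochBdd_D {A br : ℝ} {j : ℕ} {c : ℕ → ℂ} (hbr : 0 < br)
    (h : PochBdd A br j c) :
    PochBdd A br (j + 1) (fun n => ((n : ℂ) + 1) * c (n + 1)) := by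
  intro n
  have h1 := h (n + 1)
  have hb1 : (0:ℝ) < (ascPochhammer ℝ (n + 1 + j)).eval br := poch_pos hbr _
  have hnf : (0:ℝ) < (n.factorial : ℝ) := by positivity
  calc ‖((n : ℂ) + 1) * c (n + 1)‖ = ((n : ℝ) + 1) * ‖c (n + 1)‖ := by
        rw [norm_mul]
        congr 1
        have : ((n : ℂ) + 1) = ((n + 1 : ℕ) : ℂ) := by push_cast; ring
        rw [this, Complex.norm_natCast]
        push_cast; ring
  _ ≤ ((n : ℝ) + 1) * ((ascPochhammer ℝ (n + 1 + j)).eval A /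
        ((ascPochhammer ℝ (n + 1 + j)).eval br * (n + 1).factorial)) := by
        exact mul_le_mul_of_nonneg_left h1 (by positivity)
  _ = (ascPochhammer ℝ (n + (j + 1))).eval A /
        ((ascPochhammer ℝ (n + (j + 1))).eval br * n.factorial) := by
        have he : n + 1 + j = n + (j + 1) := by omega
        rw [Nat.factorial_succ, he]
        have hB : (ascPochhammer ℝ (n + (j + 1))).eval br ≠ 0 := (poch_pos hbr _).ne'
        have hf : ((n.factorial : ℝ)) ≠ 0 := by positivity
        push_cast
        rw [mul_comm, div_mul_eq_mul_div, div_eq_div_iff (by positivity) (by positivity)]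
        ring

lemma pochBdd_summable {A br : ℝ} {j : ℕ} {c : ℕ → ℂ} (hA : 1 ≤ A) (hbr : 0 < br)
    (h : PochBdd A br j c) {r : ℝ} (hr : 0 < r) :
    Summable (fun n => ‖c n‖ * r ^ n) := by
  set u : ℕ → ℝ := fun n => (ascPochhammer ℝ (n + j)).eval A /
      ((ascPochhammer ℝ (n + j)).eval br * n.factorial) * r ^ n with hu
  have hupos : ∀ n, 0 < u n := fun n => by
    have h1 : (0:ℝ) < (ascPochhammer ℝ (n + j)).eval A := poch_pos (by linarith) _
    have h2 : (0:ℝ) < (ascPochhammer ℝ (n + j)).eval br := poch_pos hbr _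
    have h3 : (0:ℝ) < (n.factorial : ℝ) := by positivity
    positivity
  have hsum : Summable u := by
    apply summable_of_ratio_norm_eventually_le (r := 1/2) (by norm_num)
    filter_upwards [eventually_ge_atTop (⌈2 * r * (A + j + 1)⌉₊)] with n hn
    have hn' : 2 * r * (A + j + 1) ≤ (n : ℝ) := le_trans (Nat.le_ceil _) (by exact_mod_cast hn)
    rw [Real.norm_of_nonneg (hupos _).le, Real.norm_of_nonneg (hupos _).le]
    have key : u (n + 1) = u n * ((A + n + j) * r / ((br + n + j) * (n + 1))) := by
      have h2 : (0:ℝ) < (ascPochhammer ℝ (n + j)).eval br := poch_pos hbr _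
      have h3 : (0:ℝ) < (n.factorial : ℝ) := by positivity
      have h4 : (0:ℝ) < br + n + j := by positivity
      rw [hu]
      simp only
      have he : n + 1 + j = (n + j) + 1 := by omega
      rw [he, ascPochhammer_succ_right, Nat.factorial_succ]
      simp only [Polynomial.eval_mul, Polynomial.eval_add, Polynomial.eval_X,
        Polynomial.eval_natCast]
      push_cast
      field_simp
      ring
    rw [key]
    have hq : (A + n + j) * r / ((br + n + j) * (n + 1)) ≤ 1/2 := by
      rw [div_le_iff₀ (by positivity)]
      have hj : (0:ℝ) ≤ (j:ℕ) := Nat.cast_nonneg j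
      have hnn : (0:ℝ) ≤ (n:ℕ) := Nat.cast_nonneg n
      have e1 : A + n + j ≤ (A + j + 1) * (n + 1) := by nlinarith
      have e2 : (n:ℝ) ≤ br + n + j := by linarith
      have p1 : (A + n + j) * r ≤ (A + j + 1) * (n + 1) * r :=
        mul_le_mul_of_nonneg_right e1 hr.le
      have p2 : ((n:ℝ) + 1) * (2 * r * (A + j + 1)) ≤ ((n:ℝ) + 1) * n :=
        mul_le_mul_of_nonneg_left hn' (by positivity)
      have p3 : ((n:ℝ) + 1) * n ≤ ((n:ℝ) + 1) * (br + n + j) :=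
        mul_le_mul_of_nonneg_left e2 (by positivity)
      linarith
    calc u n * ((A + n + j) * r / ((br + n + j) * (n + 1)))
        ≤ u n * (1/2) := mul_le_mul_of_nonneg_left hq (hupos n).le
      _ = 1/2 * u n := by ring
  apply Summable.of_nonneg_of_le (fun n => by positivity) (fun n => ?_) hsum
  exact mul_le_mul_of_nonneg_right (h n) (by positivity)

lemma pochBdd_radius {A br : ℝ} {j : ℕ} {c : ℕ → ℂ} (hA : 1 ≤ A) (hbr : 0 < br)
    (h : PochBdd A br j c) : (ofScalars ℂ c).radius = ⊤ := by
  apply ENNReal.eq_top_of_forall_nnreal_le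
  intro r
  have h1 : ((r : ℝ≥0∞)) ≤ ((r + 1 : NNReal) : ℝ≥0∞) := by
    rw [ENNReal.coe_le_coe]; simp
  refine le_trans h1 (le_radius_of_summable _ ?_)
  have : Summable (fun n => ‖c n‖ * ((r + 1 : NNReal) : ℝ) ^ n) :=
    pochBdd_summable hA hbr h (by positivity)
  apply this.congr
  intro n
  rw [ofScalars_norm]

lemma ofScalars_hasDerivAt (c : ℕ → ℂ) (hc : (ofScalars ℂ c).radius = ⊤) (z : ℂ) :
    HasDerivAt ((ofScalars ℂ c).sum)
      ((ofScalars ℂ (fun (n : ℕ) => ((n : ℂ) + 1) * c (n + 1))).sum z) z := by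
  set p := ofScalars ℂ c with hp
  have hball : HasFPowerSeriesOnBall p.sum p 0 ⊤ := by
    have := p.hasFPowerSeriesOnBall (by rw [hc]; exact ENNReal.zero_lt_top)
    rwa [hc] at this
  have hA : AnalyticAt ℂ p.sum z := hball.analyticAt_of_mem (by simp)
  have hd : HasDerivAt p.sum (deriv p.sum z) z := hA.differentiableAt.hasDerivAt
  have hW : HasFPowerSeriesWithinOnBall p.sum p Set.univ 0 ⊤ :=
    hball.hasFPowerSeriesWithinOnBall
  have hFD : HasFDerivWithinAt p.sum
      (ContinuousLinearMap.smulRight (1 : ℂ →L[ℂ] ℂ) (deriv p.sum z))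
      (insert 0 Set.univ) (0 + z) := by
    rw [zero_add]
    exact (hasDerivAt_iff_hasFDerivAt.mp hd).hasFDerivWithinAt
  have hs := hW.hasSum_derivSeries_of_hasFDerivWithinAt (by simp) (by simp) hFD
    (by simp [uniqueDiffOn_univ])
  have hs2 := (ContinuousLinearMap.apply ℂ ℂ z).hasSum hs
  simp only [ContinuousLinearMap.apply_apply] at hs2
  have hterm : ∀ n : ℕ, ((p.derivSeries n) fun _ => z) z
      = ((n : ℂ) + 1) * c (n + 1) * z ^ (n + 1) := by
    intro n
    rw [derivSeries_apply_diag, hp, ofScalars_apply_eq]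
    simp only [nsmul_eq_mul, smul_eq_mul]
    push_cast
    ring
  have hval2 : (ContinuousLinearMap.smulRight (1 : ℂ →L[ℂ] ℂ) (deriv p.sum z)) z
      = z * deriv p.sum z := by
    simp [ContinuousLinearMap.smulRight_apply, smul_eq_mul, mul_comm]
  rw [hval2] at hs2
  simp only [hterm] at hs2
  have hs3 : HasSum (fun (n : ℕ) => ((n : ℂ) + 1) * c (n + 1) * z ^ (n + 1))
      (z * deriv p.sum z) := hs2
  have hval : (ofScalars ℂ (fun (n : ℕ) => ((n : ℂ) + 1) * c (n + 1))).sum z = deriv p.sum z := by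
    rcases eq_or_ne z 0 with rfl | hz0
    · rw [FormalMultilinearSeries.sum]
      have h1 : ∀ n : ℕ, n ≠ 0 →
          (ofScalars ℂ (fun (n : ℕ) => ((n : ℂ) + 1) * c (n + 1))) n (fun _ => (0:ℂ)) = 0 := by
        intro n hn
        rw [ofScalars_apply_eq, zero_pow hn, smul_zero]
      rw [tsum_eq_single 0 h1, ofScalars_apply_eq]
      have hd0 : deriv p.sum 0 = p 1 fun _ => 1 := (hball.hasFPowerSeriesAt).deriv
      rw [hd0, hp]
      rw [ofScalars_apply_eq]
      simp
    · have h4 : HasSum (fun (n : ℕ) => ((n : ℂ) + 1) * c (n + 1) * z ^ n) (deriv p.sum z) := by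
        have h5 := hs3.mul_left z⁻¹
        have hfe : (fun (n : ℕ) => z⁻¹ * (((n : ℂ) + 1) * c (n + 1) * z ^ (n + 1)))
            = fun (n : ℕ) => ((n : ℂ) + 1) * c (n + 1) * z ^ n := by
          funext n
          rw [pow_succ]
          field_simp
        rw [hfe, inv_mul_cancel_left₀ hz0] at h5
        exact h5
      rw [FormalMultilinearSeries.sum]
      simp only [ofScalars_apply_eq, smul_eq_mul]
      exact h4.tsum_eq
  rw [hval]
  exact hd

/-- shifted-derivative coefficient sequence -/
noncomputable def Dseq (c : ℕ → ℂ) : ℕ → ℂ := fun n => ((n : ℂ) + 1) * c (n + 1)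

lemma ofScalars_hasDerivAt' (c : ℕ → ℂ) (hc : (ofScalars ℂ c).radius = ⊤) (z : ℂ) :
    HasDerivAt ((ofScalars ℂ c).sum) ((ofScalars ℂ (Dseq c)).sum z) z := by
  exact ofScalars_hasDerivAt c hc z

lemma ofScalars_hasSum (c : ℕ → ℂ) (hc : (ofScalars ℂ c).radius = ⊤) (z : ℂ) :
    HasSum (fun n => c n * z ^ n) ((ofScalars ℂ c).sum z) := by
  have hball := (ofScalars ℂ c).hasFPowerSeriesOnBall (by rw [hc]; exact ENNReal.zero_lt_top)
  have h2 := hball.hasSum (y := z) (by rw [hc]; simp)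
  simpa only [zero_add, ofScalars_apply_eq, smul_eq_mul] using h2

section Kummer

variable {a b : ℂ}

lemma pochb_ne (hb : ∀ i : ℕ, b + (i : ℂ) ≠ 0) (n : ℕ) :
    (ascPochhammer ℂ n).eval b ≠ 0 := by
  induction n with
  | zero => simp
  | succ n ih =>
    rw [ascPochhammer_succ_right]
    simp only [Polynomial.eval_mul, Polynomial.eval_add, Polynomial.eval_X,
      Polynomial.eval_natCast]
    exact mul_ne_zero ih (hb n)

lemma kc_rec (hb : ∀ i : ℕ, b + (i : ℂ) ≠ 0) (n : ℕ) :
    ((n : ℂ) + 1) * (b + n) * kc a b (n + 1) = (a + n) * kc a b n := by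
  rw [kc, kc, ascPochhammer_succ_right, Nat.factorial_succ]
  simp only [Polynomial.eval_mul, Polynomial.eval_add, Polynomial.eval_X,
    Polynomial.eval_natCast]
  have h1 : (ascPochhammer ℂ n).eval b ≠ 0 := pochb_ne hb n
  have h2 : b + n ≠ 0 := hb n
  have h3 : ((n.factorial : ℂ)) ≠ 0 := Nat.cast_ne_zero.mpr n.factorial_ne_zero
  have h4 : ((n : ℂ) + 1) ≠ 0 := by
    have := Nat.cast_add_one_ne_zero (R := ℂ) n
    exact_mod_cast this
  push_cast
  field_simp

lemma kc_zero : kc a b 0 = 1 := by simp [kc]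

lemma kc_one (hb : ∀ i : ℕ, b + (i : ℂ) ≠ 0) : b * kc a b 1 = a := by
  have h := kc_rec (a := a) hb 0
  norm_num [kc_zero] at h
  linear_combination h

lemma kummer_ode (hb : ∀ i : ℕ, b + (i : ℂ) ≠ 0)
    (h0 : (ofScalars ℂ (kc a b)).radius = ⊤)
    (h1 : (ofScalars ℂ (Dseq (kc a b))).radius = ⊤)
    (h2 : (ofScalars ℂ (Dseq (Dseq (kc a b)))).radius = ⊤) (z : ℂ) :
    z * (ofScalars ℂ (Dseq (Dseq (kc a b)))).sum z
      + (b - z) * (ofScalars ℂ (Dseq (kc a b))).sum z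
      - a * (ofScalars ℂ (kc a b)).sum z = 0 := by
  set c := kc a b with hc
  set F := (ofScalars ℂ c).sum z with hF
  set G := (ofScalars ℂ (Dseq c)).sum z with hG
  set H := (ofScalars ℂ (Dseq (Dseq c))).sum z with hH
  have hFs : HasSum (fun n => c n * z ^ n) F := ofScalars_hasSum _ h0 z
  have hGs : HasSum (fun n => Dseq c n * z ^ n) G := ofScalars_hasSum _ h1 z
  have hHs : HasSum (fun n => Dseq (Dseq c) n * z ^ n) H := ofScalars_hasSum _ h2 z
  set r : ℕ → ℂ := fun n => b * (Dseq c n * z ^ n) - a * (c n * z ^ n) with hr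
  set v : ℕ → ℂ := fun n => z * (Dseq (Dseq c) n * z ^ n) - z * (Dseq c n * z ^ n) with hv
  have hrs : HasSum r (b * G - a * F) := (hGs.mul_left b).sub (hFs.mul_left a)
  have hvs : HasSum v (z * H - z * G) := (hHs.mul_left z).sub (hGs.mul_left z)
  have hr0 : r 0 = 0 := by
    have hd0 : Dseq c 0 = kc a b 1 := by norm_num [Dseq, hc]
    rw [hr]
    simp only [pow_zero, mul_one, hd0, hc, kc_zero]
    rw [show Dseq (kc a b) 0 = kc a b 1 by norm_num [Dseq]]
    linear_combination kc_one (a := a) hb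
  have hshift : HasSum (fun n => r (n + 1)) ((b * G - a * F) - r 0) := by
    have := (hasSum_nat_add_iff' (f := r) 1).mpr hrs
    simpa using this
  have hcanc : ∀ n : ℕ, v n + r (n + 1) = 0 := by
    intro n
    have hrec := kc_rec (a := a) hb (n + 1)
    rw [hv, hr]
    simp only [Dseq]
    push_cast at hrec ⊢
    have hzp : z ^ (n + 1) = z ^ n * z := pow_succ z n
    rw [hzp]
    linear_combination (z ^ n * z) * hrec
  have htotal : HasSum (fun n => v n + r (n + 1)) (z * H - z * G + ((b * G - a * F) - r 0)) :=
    hvs.add hshift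
  have hzero : (fun n => v n + r (n + 1)) = fun _ => (0 : ℂ) := funext hcanc
  rw [hzero] at htotal
  have := hasSum_zero.unique htotal
  rw [hr0] at this
  linear_combination -this

end Kummer

/-- With `λ = l(2l+2k+n-2)`, `a = (m+4l+2k+n)/4`, `b = 2l+k+n/2`, the function
`ψ(ρ) = e^{-isρ²} ρ^{2l} ₁F₁(a,b,2isρ²)` satisfies
`ρ²ψ'' + (n-1+2k)ρψ' + (4s²ρ⁴ - 2ismρ² - 2λ)ψ = 0` for `ρ > 0`. -/
theorem stmt11 (n k l : ℕ) (hn : 1 ≤ n) (m : ℤ) (s : ℂ)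
    (ψ : ℝ → ℂ)
    (hψ : ∀ ρ : ℝ, ψ ρ =
      Complex.exp (-Complex.I * s * ((ρ : ℝ) : ℂ) ^ 2) * ((ρ : ℝ) : ℂ) ^ (2 * l) *
        oneF1 (((m : ℂ) + 4 * (l : ℂ) + 2 * (k : ℂ) + (n : ℂ)) / 4)
          (2 * (l : ℂ) + (k : ℂ) + (n : ℂ) / 2)
          (2 * Complex.I * s * ((ρ : ℝ) : ℂ) ^ 2)) :
    ∀ ρ : ℝ, 0 < ρ →
      ((ρ : ℝ) : ℂ) ^ 2 * deriv (deriv ψ) ρ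
        + ((n : ℂ) - 1 + 2 * (k : ℂ)) * (ρ : ℂ) * deriv ψ ρ
        + (4 * s ^ 2 * ((ρ : ℝ) : ℂ) ^ 4 - 2 * Complex.I * s * (m : ℂ) * ((ρ : ℝ) : ℂ) ^ 2
            - 2 * ((l : ℂ) * (2 * (l : ℂ) + 2 * (k : ℂ) + (n : ℂ) - 2))) * ψ ρ = 0 := by
  set a : ℂ := ((m : ℂ) + 4 * (l : ℂ) + 2 * (k : ℂ) + (n : ℂ)) / 4 with ha
  set b : ℂ := 2 * (l : ℂ) + (k : ℂ) + (n : ℂ) / 2 with hbdef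
  have hn1 : (1:ℝ) ≤ (n:ℝ) := by exact_mod_cast hn
  set brv : ℝ := 2 * (l:ℝ) + (k:ℝ) + (n:ℝ) / 2 with hbrv
  have hbrvpos : 0 < brv := by
    have h1 : (0:ℝ) ≤ (l:ℝ) := l.cast_nonneg
    have h2 : (0:ℝ) ≤ (k:ℝ) := k.cast_nonneg
    rw [hbrv]; linarith
  have hbre : b = ((brv : ℝ) : ℂ) := by rw [hbdef, hbrv]; push_cast; ring
  have hb : ∀ i : ℕ, b + (i : ℂ) ≠ 0 := by
    intro i
    rw [hbre]
    have h1 : ((brv : ℝ) : ℂ) + (i : ℂ) = (((brv + i : ℝ)) : ℂ) := by push_cast; ring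
    rw [h1]
    exact_mod_cast ne_of_gt (by positivity : (0:ℝ) < brv + i)
  have hA1 : (1:ℝ) ≤ ‖a‖ + 1 := le_add_of_nonneg_left (norm_nonneg a)
  have hbdd0 : PochBdd (‖a‖ + 1) brv 0 (kc a b) := by
    intro j
    rw [kc, hbre, poch_real]
    have hpos : (0:ℝ) < (ascPochhammer ℝ j).eval brv := poch_pos hbrvpos j
    have hnf : (0:ℝ) < (j.factorial : ℝ) := by positivity
    rw [norm_div, norm_mul, Complex.norm_real, Complex.norm_natCast,
      Real.norm_of_nonneg hpos.le, Nat.add_zero]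
    gcongr
    exact poch_norm_le a j
  have hbdd1 := pochBdd_D hbrvpos hbdd0
  have hbdd2 := pochBdd_D hbrvpos hbdd1
  have r0 : (ofScalars ℂ (kc a b)).radius = ⊤ := pochBdd_radius hA1 hbrvpos hbdd0
  have r1 : (ofScalars ℂ (Dseq (kc a b))).radius = ⊤ := pochBdd_radius hA1 hbrvpos hbdd1
  have r2 : (ofScalars ℂ (Dseq (Dseq (kc a b)))).radius = ⊤ := pochBdd_radius hA1 hbrvpos hbdd2
  set F : ℂ → ℂ := (ofScalars ℂ (kc a b)).sum with hFdef
  set G : ℂ → ℂ := (ofScalars ℂ (Dseq (kc a b))).sum with hGdef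
  set H : ℂ → ℂ := (ofScalars ℂ (Dseq (Dseq (kc a b)))).sum with hHdef
  have hderF : ∀ z : ℂ, HasDerivAt F (G z) z := fun z => ofScalars_hasDerivAt' _ r0 z
  have hderG : ∀ z : ℂ, HasDerivAt G (H z) z := fun z => ofScalars_hasDerivAt' _ r1 z
  have hFone : ∀ z : ℂ, oneF1 a b z = F z := fun z => by
    rw [oneF1_eq_tsum, hFdef]
    exact (ofScalars_hasSum _ r0 z).tsum_eq
  have hψfun : ψ = fun x : ℝ =>
      Complex.exp (-Complex.I * s * ((x : ℝ) : ℂ) ^ 2) * ((x : ℝ) : ℂ) ^ (2 * l) *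
        F (2 * Complex.I * s * ((x : ℝ) : ℂ) ^ 2) := by
    funext x
    rw [hψ x, hFone]
  -- first derivative
  set φ1 : ℝ → ℂ := fun y : ℝ =>
    -2 * Complex.I * s * ((y : ℝ) : ℂ) * Complex.exp (-Complex.I * s * ((y : ℝ) : ℂ) ^ 2)
        * ((y : ℝ) : ℂ) ^ (2 * l) * F (2 * Complex.I * s * ((y : ℝ) : ℂ) ^ 2)
      + Complex.exp (-Complex.I * s * ((y : ℝ) : ℂ) ^ 2)
        * (((2 * l : ℕ) : ℂ) * ((y : ℝ) : ℂ) ^ (2 * l - 1))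
        * F (2 * Complex.I * s * ((y : ℝ) : ℂ) ^ 2)
      + Complex.exp (-Complex.I * s * ((y : ℝ) : ℂ) ^ 2) * ((y : ℝ) : ℂ) ^ (2 * l)
        * (G (2 * Complex.I * s * ((y : ℝ) : ℂ) ^ 2) * (4 * Complex.I * s * ((y : ℝ) : ℂ)))
    with hφ1
  set φ2 : ℝ → ℂ := fun y : ℝ =>
    (-2 * Complex.I * s * Complex.exp (-Complex.I * s * ((y : ℝ) : ℂ) ^ 2)
        * ((y : ℝ) : ℂ) ^ (2 * l) * F (2 * Complex.I * s * ((y : ℝ) : ℂ) ^ 2)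
      + -2 * Complex.I * s * ((y : ℝ) : ℂ)
        * (-2 * Complex.I * s * ((y : ℝ) : ℂ) * Complex.exp (-Complex.I * s * ((y : ℝ) : ℂ) ^ 2))
        * ((y : ℝ) : ℂ) ^ (2 * l) * F (2 * Complex.I * s * ((y : ℝ) : ℂ) ^ 2)
      + -2 * Complex.I * s * ((y : ℝ) : ℂ) * Complex.exp (-Complex.I * s * ((y : ℝ) : ℂ) ^ 2)
        * (((2 * l : ℕ) : ℂ) * ((y : ℝ) : ℂ) ^ (2 * l - 1))
        * F (2 * Complex.I * s * ((y : ℝ) : ℂ) ^ 2)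
      + -2 * Complex.I * s * ((y : ℝ) : ℂ) * Complex.exp (-Complex.I * s * ((y : ℝ) : ℂ) ^ 2)
        * ((y : ℝ) : ℂ) ^ (2 * l)
        * (G (2 * Complex.I * s * ((y : ℝ) : ℂ) ^ 2) * (4 * Complex.I * s * ((y : ℝ) : ℂ))))
    + ((-2 * Complex.I * s * ((y : ℝ) : ℂ) * Complex.exp (-Complex.I * s * ((y : ℝ) : ℂ) ^ 2))
        * (((2 * l : ℕ) : ℂ) * ((y : ℝ) : ℂ) ^ (2 * l - 1))
        * F (2 * Complex.I * s * ((y : ℝ) : ℂ) ^ 2)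
      + Complex.exp (-Complex.I * s * ((y : ℝ) : ℂ) ^ 2)
        * (((2 * l : ℕ) : ℂ) * (((2 * l - 1 : ℕ) : ℂ) * ((y : ℝ) : ℂ) ^ (2 * l - 2)))
        * F (2 * Complex.I * s * ((y : ℝ) : ℂ) ^ 2)
      + Complex.exp (-Complex.I * s * ((y : ℝ) : ℂ) ^ 2)
        * (((2 * l : ℕ) : ℂ) * ((y : ℝ) : ℂ) ^ (2 * l - 1))
        * (G (2 * Complex.I * s * ((y : ℝ) : ℂ) ^ 2) * (4 * Complex.I * s * ((y : ℝ) : ℂ))))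
    + ((-2 * Complex.I * s * ((y : ℝ) : ℂ) * Complex.exp (-Complex.I * s * ((y : ℝ) : ℂ) ^ 2))
        * ((y : ℝ) : ℂ) ^ (2 * l)
        * (G (2 * Complex.I * s * ((y : ℝ) : ℂ) ^ 2) * (4 * Complex.I * s * ((y : ℝ) : ℂ)))
      + Complex.exp (-Complex.I * s * ((y : ℝ) : ℂ) ^ 2)
        * (((2 * l : ℕ) : ℂ) * ((y : ℝ) : ℂ) ^ (2 * l - 1))
        * (G (2 * Complex.I * s * ((y : ℝ) : ℂ) ^ 2) * (4 * Complex.I * s * ((y : ℝ) : ℂ)))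
      + Complex.exp (-Complex.I * s * ((y : ℝ) : ℂ) ^ 2) * ((y : ℝ) : ℂ) ^ (2 * l)
        * (H (2 * Complex.I * s * ((y : ℝ) : ℂ) ^ 2) * (4 * Complex.I * s * ((y : ℝ) : ℂ))
              * (4 * Complex.I * s * ((y : ℝ) : ℂ))
            + G (2 * Complex.I * s * ((y : ℝ) : ℂ) ^ 2) * (4 * Complex.I * s)))
    with hφ2
  have hx1 : ∀ x : ℝ, HasDerivAt (fun y : ℝ => ((y : ℝ) : ℂ)) 1 x := fun x => by
    have h := Complex.ofRealCLM.hasDerivAt (x := x)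
    simp only [Complex.ofRealCLM_apply, Complex.ofReal_one] at h
    exact h
  have hx2 : ∀ x : ℝ, HasDerivAt (fun y : ℝ => ((y : ℝ) : ℂ) ^ 2) (2 * ((x : ℝ) : ℂ)) x :=
    fun x => by simpa [Function.comp_def] using (hasDerivAt_pow 2 ((x : ℝ) : ℂ)).comp x (hx1 x)
  have hE : ∀ x : ℝ, HasDerivAt (fun y : ℝ => Complex.exp (-Complex.I * s * ((y : ℝ) : ℂ) ^ 2))
      (Complex.exp (-Complex.I * s * ((x : ℝ) : ℂ) ^ 2) * (-Complex.I * s * (2 * ((x : ℝ) : ℂ)))) x :=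
    fun x => ((hx2 x).const_mul (-Complex.I * s)).cexp
  have hV : ∀ x : ℝ, HasDerivAt (fun y : ℝ => ((y : ℝ) : ℂ) ^ (2 * l))
      (((2 * l : ℕ) : ℂ) * ((x : ℝ) : ℂ) ^ (2 * l - 1)) x := fun x => by
    simpa [Function.comp_def] using (hasDerivAt_pow (2 * l) ((x : ℝ) : ℂ)).comp x (hx1 x)
  have hw : ∀ x : ℝ, HasDerivAt (fun y : ℝ => 2 * Complex.I * s * ((y : ℝ) : ℂ) ^ 2)
      (2 * Complex.I * s * (2 * ((x : ℝ) : ℂ))) x := fun x => (hx2 x).const_mul _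
  have hFw : ∀ x : ℝ, HasDerivAt (fun y : ℝ => F (2 * Complex.I * s * ((y : ℝ) : ℂ) ^ 2))
      (G (2 * Complex.I * s * ((x : ℝ) : ℂ) ^ 2) * (2 * Complex.I * s * (2 * ((x : ℝ) : ℂ)))) x :=
    fun x => by
      have h := (hderF (2 * Complex.I * s * ((x : ℝ) : ℂ) ^ 2)).comp x (hw x)
      simpa [Function.comp_def] using h
  have hGw : ∀ x : ℝ, HasDerivAt (fun y : ℝ => G (2 * Complex.I * s * ((y : ℝ) : ℂ) ^ 2))
      (H (2 * Complex.I * s * ((x : ℝ) : ℂ) ^ 2) * (2 * Complex.I * s * (2 * ((x : ℝ) : ℂ)))) x :=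
    fun x => by
      have h := (hderG (2 * Complex.I * s * ((x : ℝ) : ℂ) ^ 2)).comp x (hw x)
      simpa [Function.comp_def] using h
  have hd1 : ∀ x : ℝ, HasDerivAt (fun x : ℝ =>
      Complex.exp (-Complex.I * s * ((x : ℝ) : ℂ) ^ 2) * ((x : ℝ) : ℂ) ^ (2 * l) *
        F (2 * Complex.I * s * ((x : ℝ) : ℂ) ^ 2)) (φ1 x) x := fun x => by
    have h := ((hE x).mul (hV x)).mul (hFw x)
    rw [hφ1]
    refine h.congr_deriv ?_
    simp only [Pi.mul_apply]
    ring
  have hder1 : deriv ψ = φ1 := by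
    rw [hψfun]
    funext x
    exact (hd1 x).deriv
  have hc1 : ∀ x : ℝ, HasDerivAt (fun y : ℝ => -2 * Complex.I * s * ((y : ℝ) : ℂ))
      (-2 * Complex.I * s * 1) x := fun x => (hx1 x).const_mul _
  have hlin : ∀ x : ℝ, HasDerivAt (fun y : ℝ => 4 * Complex.I * s * ((y : ℝ) : ℂ))
      (4 * Complex.I * s * 1) x := fun x => (hx1 x).const_mul _
  have hV1 : ∀ x : ℝ, HasDerivAt (fun y : ℝ => ((2 * l : ℕ) : ℂ) * ((y : ℝ) : ℂ) ^ (2 * l - 1))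
      (((2 * l : ℕ) : ℂ) * (((2 * l - 1 : ℕ) : ℂ) * ((x : ℝ) : ℂ) ^ (2 * l - 1 - 1))) x :=
    fun x => by
    have h := ((hasDerivAt_pow (2 * l - 1) ((x : ℝ) : ℂ)).comp x (hx1 x)).const_mul
      (((2 * l : ℕ) : ℂ))
    simpa [Function.comp, mul_assoc] using h
  have hd2 : ∀ x : ℝ, HasDerivAt φ1 (φ2 x) x := fun x => by
    rw [hφ1, hφ2]
    have hT1 := (((hc1 x).mul (hE x)).mul (hV x)).mul (hFw x)
    have hT2 := (((hE x).mul (hV1 x))).mul (hFw x)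
    have hT3 := ((hE x).mul (hV x)).mul ((hGw x).mul (hlin x))
    have h := (hT1.add hT2).add hT3
    have he1 : (2 * l - 1 - 1 : ℕ) = 2 * l - 2 := by omega
    rw [he1] at h
    refine h.congr_deriv ?_
    simp only [Pi.mul_apply]
    ring
  intro ρ hρ
  have hρ0 : ((ρ : ℝ) : ℂ) ≠ 0 := by simpa using ne_of_gt hρ
  have hk := kummer_ode hb r0 r1 r2 (2 * Complex.I * s * ((ρ : ℝ) : ℂ) ^ 2)
  rw [← hFdef, ← hGdef, ← hHdef] at hk
  rw [hder1, (hd2 ρ).deriv, hψfun]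
  simp only [hφ1, hφ2]
  rcases Nat.eq_zero_or_pos l with rfl | hl
  · norm_num
    linear_combination (8 * Complex.I * s * ((ρ : ℝ) : ℂ) ^ 2
        * Complex.exp (-(Complex.I * s * ((ρ : ℝ) : ℂ) ^ 2))) * hk
      + (4 * s ^ 2 * ((ρ : ℝ) : ℂ) ^ 4 * Complex.exp (-(Complex.I * s * ((ρ : ℝ) : ℂ) ^ 2))
        * F (2 * Complex.I * s * ((ρ : ℝ) : ℂ) ^ 2)) * Complex.I_sq
  · set M := 2 * l - 2 with hM
    have hp0 : ((ρ : ℝ) : ℂ) ^ (2 * l) = ((ρ : ℝ) : ℂ) ^ M * ((ρ : ℝ) : ℂ) * ((ρ : ℝ) : ℂ) := by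
      rw [show 2 * l = M + 1 + 1 by omega, pow_succ, pow_succ]
    have hp1 : ((ρ : ℝ) : ℂ) ^ (2 * l - 1) = ((ρ : ℝ) : ℂ) ^ M * ((ρ : ℝ) : ℂ) := by
      rw [show 2 * l - 1 = M + 1 by omega, pow_succ]
    have hc2 : ((2 * l : ℕ) : ℂ) = 2 * (l : ℂ) := by push_cast; ring
    have hc3 : ((2 * l - 1 : ℕ) : ℂ) = 2 * (l : ℂ) - 1 := by
      rw [Nat.cast_sub (by omega : 1 ≤ 2 * l)]
      push_cast
      ring
    rw [hp0, hp1, hc2, hc3]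
    linear_combination (8 * Complex.I * s * ((ρ : ℝ) : ℂ) ^ 2
        * Complex.exp (-Complex.I * s * ((ρ : ℝ) : ℂ) ^ 2)
        * (((ρ : ℝ) : ℂ) ^ M * ((ρ : ℝ) : ℂ) * ((ρ : ℝ) : ℂ))) * hk
      + (4 * s ^ 2 * ((ρ : ℝ) : ℂ) ^ 4 * Complex.exp (-Complex.I * s * ((ρ : ℝ) : ℂ) ^ 2)
        * (((ρ : ℝ) : ℂ) ^ M * ((ρ : ℝ) : ℂ) * ((ρ : ℝ) : ℂ))
        * F (2 * Complex.I * s * ((ρ : ℝ) : ℂ) ^ 2)) * Complex.I_sq
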